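/- Let p ≥ 1 and r_1, …, r_p ≥ 1 be integers and set r = r_1 + ⋯ + r_p. Let A = diag(A_{r_1}, …, A_{r_p}) ∈ ℝ^{r×r} and B = diag(B_{r_1}, …, B_{r_p}) ∈ ℝ^{r×p} be the block-diagonal chain-of-integrators pair, where A_s ∈ ℝ^{s×s} is the upper shift matrix (entries (A_s)_{i,i+1} = 1 and all other entries 0) and B_s ∈ ℝ^{s×1} is the column vector with last entry 1 and all other entries 0. Then for every ς > 0 there exist a matrix K ∈ ℝ^{p×r}, a constant ϑ > 0, a symmetric positive definite matrix X ∈ ℝ^{r×r}, and a matrix R ∈ ℝ^{r×r} such that X(A − ς B K) + (A − ς B K)ᵀ X = −Rᵀ R − 2ϑ X and X B = Kᵀ. -/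

import Mathlib

open Matrix Finset

namespace Stmt14Aux

/-! ### Scalar combinatorial lemmas -/

lemma vander (q u s : ℕ) (hq : q < s) :
    ∑ k ∈ Finset.range s, q.choose k * u.choose k = (q + u).choose q := by
  have h1 : ∑ k ∈ Finset.range s, q.choose k * u.choose k
      = ∑ k ∈ Finset.range (q+1), q.choose k * u.choose k := by
    symm
    apply Finset.sum_subset
    · intro k hk
      simp only [Finset.mem_range] at *
      omega
    · intro k _ hk
      simp only [Finset.mem_range, not_lt] at hk
      rw [Nat.choose_eq_zero_of_lt (by omega), zero_mul]
  rw [h1, Nat.add_choose_eq q u q, Finset.Nat.sum_antidiagonal_eq_sum_range_succ_mk]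
  rw [← Finset.sum_range_reflect]
  apply Finset.sum_congr rfl
  intro k hk
  simp only [Finset.mem_range] at hk
  have hk' : k ≤ q := by omega
  have h2 : q + 1 - 1 - k = q - k := by omega
  rw [h2, Nat.choose_symm hk']

/-! ### The block matrices -/

def Sval (s a b : ℕ) : ℝ :=
  (-1 : ℝ) ^ (a + b) * (Nat.choose ((s - 1 - a) + (s - 1 - b)) (s - 1 - a))

def Sm (s : ℕ) : Matrix (Fin s) (Fin s) ℝ :=
  Matrix.of fun i j => Sval s (i : ℕ) (j : ℕ)

def Aof (s : ℕ) : Matrix (Fin s) (Fin s) ℝ :=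
  Matrix.of fun a b => if (a : ℕ) + 1 = (b : ℕ) then (1 : ℝ) else 0

def Eof (s : ℕ) : Matrix (Fin s) (Fin s) ℝ :=
  Matrix.of fun a b => if ((a : ℕ) + 1 = s ∧ (b : ℕ) + 1 = s) then (1 : ℝ) else 0

def Mm (s : ℕ) : Matrix (Fin s) (Fin s) ℝ :=
  Matrix.of fun i k => (-1 : ℝ) ^ ((i : ℕ)) * (Nat.choose (s - 1 - (i:ℕ)) (k:ℕ))

lemma Sm_eq (s : ℕ) : Sm s = Mm s * (Mm s)ᵀ := by
  ext i j
  simp only [Sm, Sval, Mm, Matrix.mul_apply, Matrix.transpose_apply, Matrix.of_apply]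
  have : ∀ k : Fin s,
      (-1:ℝ) ^ (i:ℕ) * ((s - 1 - (i:ℕ)).choose k) *
        ((-1:ℝ) ^ (j:ℕ) * ((s - 1 - (j:ℕ)).choose k))
      = (-1:ℝ) ^ ((i:ℕ)+(j:ℕ)) *
        (((s - 1 - (i:ℕ)).choose k) * ((s - 1 - (j:ℕ)).choose k)) := by
    intro k; rw [pow_add]; ring
  rw [Finset.sum_congr rfl (fun k _ => this k), ← Finset.mul_sum]
  congr 1
  rw [Fin.sum_univ_eq_sum_range (fun k => (((s - 1 - (i:ℕ)).choose k : ℝ) * ((s - 1 - (j:ℕ)).choose k)))]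
  rw [show (((s-1-(i:ℕ)) + (s-1-(j:ℕ))).choose (s-1-(i:ℕ)) : ℝ)
      = ((∑ k ∈ Finset.range s, (s-1-(i:ℕ)).choose k * (s-1-(j:ℕ)).choose k : ℕ) : ℝ) by
    rw [vander _ _ s (by omega)]]
  push_cast
  rfl

lemma Mm_det_ne (s : ℕ) : (Mm s).det ≠ 0 := by
  have hperm := Matrix.det_permute (Fin.revPerm : Equiv.Perm (Fin s)) (Mm s)
  have hlow : ((Mm s).submatrix (⇑Fin.revPerm) id).det = ∏ i, Mm s (Fin.revPerm i) i := by
    apply Matrix.det_of_lowerTriangular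
    intro i j hij
    have hij' : (i : ℕ) < (j : ℕ) := hij
    simp only [Mm, Matrix.of_apply, Fin.revPerm_apply, Matrix.submatrix_apply, id]
    have h1 : (s - 1 - ((Fin.rev i : Fin s) : ℕ)) = (i : ℕ) := by
      have := i.isLt; simp [Fin.val_rev]; omega
    rw [h1, Nat.choose_eq_zero_of_lt hij']
    simp
  have hprod : (∏ i, Mm s (Fin.revPerm i) i) ≠ 0 := by
    apply Finset.prod_ne_zero_iff.mpr
    intro i _
    simp only [Mm, Matrix.of_apply, Fin.revPerm_apply]
    have h1 : (s - 1 - ((Fin.rev i : Fin s) : ℕ)) = (i : ℕ) := by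
      have := i.isLt; simp [Fin.val_rev]; omega
    rw [h1, Nat.choose_self]
    simp [pow_ne_zero]
  rw [hlow] at hperm
  intro h
  rw [h, mul_zero] at hperm
  exact hprod hperm

lemma MMt_posDef (s : ℕ) : (Mm s * (Mm s)ᵀ).PosDef := by
  rw [Matrix.posDef_iff_dotProduct_mulVec]
  constructor
  · have := Matrix.isHermitian_mul_conjTranspose_self (Mm s)
    simpa [Matrix.conjTranspose_eq_transpose_of_trivial] using this
  · intro x hx
    have hy : (Mm s)ᵀ *ᵥ x ≠ 0 := by
      intro h
      have hinj : Function.Injective ((Mm s)ᵀ).mulVec := by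
        rw [Matrix.mulVec_injective_iff_isUnit, Matrix.isUnit_iff_isUnit_det,
          Matrix.det_transpose]
        exact (Mm_det_ne s) |> isUnit_iff_ne_zero.mpr
      have : (Mm s)ᵀ *ᵥ x = (Mm s)ᵀ *ᵥ 0 := by rw [h, Matrix.mulVec_zero]
      exact hx (hinj this)
    have hcalc : dotProduct (star x) ((Mm s * (Mm s)ᵀ) *ᵥ x)
        = dotProduct (star ((Mm s)ᵀ *ᵥ x)) ((Mm s)ᵀ *ᵥ x) := by
      rw [← Matrix.mulVec_mulVec, star_trivial, star_trivial,
        Matrix.dotProduct_mulVec, Matrix.mulVec_transpose]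
    rw [hcalc]
    exact Matrix.dotProduct_star_self_pos_iff.mpr hy

lemma Sm_posDef (s : ℕ) : (Sm s).PosDef := by
  rw [Sm_eq]; exact MMt_posDef s

/-! ### The Lyapunov identity -/

lemma key1 (s a b : ℕ) (ha : a + 1 < s) (hb : b + 1 < s) :
    Sval s (a+1) b + Sval s a (b+1) + Sval s a b = 0 := by
  set q1 := s - 1 - (a+1) with hq1
  set u1 := s - 1 - (b+1) with hu1
  have e1 : s - 1 - a = q1 + 1 := by omega
  have e2 : s - 1 - b = u1 + 1 := by omega
  have hc : Nat.choose ((q1+1) + (u1+1)) (q1+1)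
      = Nat.choose (q1 + (u1+1)) q1 + Nat.choose ((q1+1) + u1) (q1+1) := by
    have h0 := Nat.choose_succ_succ (q1 + (u1+1)) q1
    simp only [Nat.succ_eq_add_one] at h0
    have e3 : q1 + (u1+1) + 1 = (q1+1) + (u1+1) := by omega
    have e4 : q1 + (u1+1) = (q1+1) + u1 := by omega
    rw [e3] at h0
    rw [h0]
    congr 1
    rw [e4]
  simp only [Sval, e1, e2]
  have e5 : a + 1 + b = (a+b) + 1 := by omega
  have e6 : a + (b+1) = (a+b) + 1 := by omega
  rw [e5, e6, pow_succ, hc]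
  push_cast
  ring

lemma key2 (s a b : ℕ) (ha : a + 1 = s) (hb : b + 1 < s) :
    Sval s a (b+1) + Sval s a b = 0 := by
  simp only [Sval]
  have e1 : s - 1 - a = 0 := by omega
  rw [e1]
  simp only [zero_add, Nat.choose_zero_right]
  have e6 : a + (b+1) = (a+b) + 1 := by omega
  rw [e6, pow_succ]
  push_cast
  ring

lemma key3 (s a b : ℕ) (ha : a + 1 < s) (hb : b + 1 = s) :
    Sval s (a+1) b + Sval s a b = 0 := by
  simp only [Sval]
  have e1 : s - 1 - b = 0 := by omega
  rw [e1]
  simp only [add_zero, Nat.choose_self]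
  have e5 : a + 1 + b = (a+b) + 1 := by omega
  rw [e5, pow_succ]
  push_cast
  ring

lemma key4 (s a b : ℕ) (ha : a + 1 = s) (hb : b + 1 = s) : Sval s a b = 1 := by
  simp only [Sval]
  have e1 : s - 1 - a = 0 := by omega
  have e2 : s - 1 - b = 0 := by omega
  have e3 : a = b := by omega
  rw [e1, e2, e3]
  simp only [Nat.choose_self]
  have : Even (b + b) := ⟨b, rfl⟩
  rw [this.neg_one_pow]
  simp

lemma sum_left {s : ℕ} (i : Fin s) (f : Fin s → ℝ) :
    (∑ k : Fin s, (if (i:ℕ)+1 = (k:ℕ) then (1:ℝ) else 0) * f k)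
    = if h : (i:ℕ)+1 < s then f ⟨(i:ℕ)+1, h⟩ else 0 := by
  split_ifs with h
  · rw [Finset.sum_eq_single (⟨(i:ℕ)+1, h⟩ : Fin s)]
    · simp
    · intro k _ hk
      have : (i:ℕ)+1 ≠ (k:ℕ) := fun hc => hk (Fin.ext hc.symm)
      simp [this]
    · simp
  · apply Finset.sum_eq_zero
    intro k _
    have : (i:ℕ)+1 ≠ (k:ℕ) := by have := k.isLt; omega
    simp [this]

lemma lyap (s : ℕ) : Aof s * Sm s + Sm s * (Aof s)ᵀ + Sm s = Eof s := by
  ext i j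
  have h1 : (Aof s * Sm s) i j
      = if h : (i:ℕ)+1 < s then Sval s ((i:ℕ)+1) (j:ℕ) else 0 := by
    simp only [Matrix.mul_apply, Aof, Sm, Matrix.of_apply]
    exact sum_left i _
  have h2 : (Sm s * (Aof s)ᵀ) i j
      = if h : (j:ℕ)+1 < s then Sval s (i:ℕ) ((j:ℕ)+1) else 0 := by
    simp only [Matrix.mul_apply, Matrix.transpose_apply, Aof, Sm, Matrix.of_apply]
    have : ∀ k : Fin s, Sval s (i:ℕ) (k:ℕ) * (if (j:ℕ)+1 = (k:ℕ) then (1:ℝ) else 0)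
        = (if (j:ℕ)+1 = (k:ℕ) then (1:ℝ) else 0) * Sval s (i:ℕ) (k:ℕ) := fun k => by ring
    rw [Finset.sum_congr rfl (fun k _ => this k)]
    exact sum_left j _
  rw [Matrix.add_apply, Matrix.add_apply, h1, h2]
  simp only [Sm, Eof, Matrix.of_apply]
  have hi := i.isLt
  have hj := j.isLt
  rcases Nat.lt_or_ge ((i:ℕ)+1) s with hlt | hge
  · rcases Nat.lt_or_ge ((j:ℕ)+1) s with hlt' | hge'
    · rw [dif_pos hlt, dif_pos hlt', if_neg (by omega)]
      exact key1 s i j hlt hlt'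
    · have hjs : (j:ℕ)+1 = s := by omega
      rw [dif_pos hlt, dif_neg (by omega), if_neg (by omega)]
      have := key3 s i j hlt hjs
      linarith [this]
  · have his : (i:ℕ)+1 = s := by omega
    rcases Nat.lt_or_ge ((j:ℕ)+1) s with hlt' | hge'
    · rw [dif_neg (by omega), dif_pos hlt', if_neg (by omega)]
      have := key2 s i j his hlt'
      linarith [this]
    · have hjs : (j:ℕ)+1 = s := by omega
      rw [dif_neg (by omega), dif_neg (by omega), if_pos ⟨his, hjs⟩]
      have := key4 s i j his hjs
      linarith [this]

/-! ### PosDef helpers -/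

lemma posDef_smul {n : Type*} [Fintype n] {M : Matrix n n ℝ} (hM : M.PosDef) {c : ℝ}
    (hc : 0 < c) : (c • M).PosDef := by
  rw [Matrix.posDef_iff_dotProduct_mulVec]
  constructor
  · show (c • M)ᴴ = c • M
    rw [Matrix.conjTranspose_smul, hM.1.eq]
    simp
  · intro x hx
    rw [Matrix.smul_mulVec, dotProduct_smul]
    exact mul_pos hc (hM.dotProduct_mulVec_pos hx)

lemma posDef_blockDiagonal' {p : ℕ} {r : Fin p → ℕ}
    (M : ∀ i, Matrix (Fin (r i)) (Fin (r i)) ℝ)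
    (hM : ∀ i, (M i).PosDef) : (Matrix.blockDiagonal' M).PosDef := by
  rw [Matrix.posDef_iff_dotProduct_mulVec]
  constructor
  · show (Matrix.blockDiagonal' M)ᴴ = Matrix.blockDiagonal' M
    rw [Matrix.blockDiagonal'_conjTranspose]
    have h : (fun k => (M k)ᴴ) = M := funext fun i => (hM i).1.eq
    rw [h]
  · intro x hx
    have hmv : ∀ (i : Fin p) (a : Fin (r i)),
        ((Matrix.blockDiagonal' M) *ᵥ x) ⟨i, a⟩
          = ((M i) *ᵥ (fun b => x ⟨i, b⟩)) a := by
      intro i a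
      simp only [Matrix.mulVec, dotProduct]
      rw [← Finset.univ_sigma_univ, Finset.sum_sigma]
      rw [Finset.sum_eq_single i]
      · apply Finset.sum_congr rfl
        intro b _
        rw [Matrix.blockDiagonal'_apply_eq]
      · intro j _ hj
        apply Finset.sum_eq_zero
        intro b _
        rw [Matrix.blockDiagonal'_apply_ne _ _ _ (Ne.symm hj), zero_mul]
      · simp
    have hsplit : dotProduct (star x) ((Matrix.blockDiagonal' M) *ᵥ x)
        = ∑ i, dotProduct (star (fun a => x ⟨i, a⟩)) ((M i) *ᵥ (fun a => x ⟨i, a⟩)) := by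
      simp only [dotProduct, star_trivial, Pi.star_apply]
      rw [← Finset.univ_sigma_univ, Finset.sum_sigma]
      apply Finset.sum_congr rfl
      intro i _
      apply Finset.sum_congr rfl
      intro a _
      rw [hmv i a]
    rw [hsplit]
    have hnz : ∃ i : Fin p, (fun a => x ⟨i, a⟩) ≠ 0 := by
      by_contra h
      push_neg at h
      apply hx
      funext y
      rcases y with ⟨i, a⟩
      have := congrFun (h i) a
      simpa using this
    obtain ⟨i0, hi0⟩ := hnz
    apply Finset.sum_pos'
    · intro i _
      by_cases hzi : (fun a => x ⟨i, a⟩) = 0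
      · rw [hzi]
        simp
      · exact le_of_lt ((hM i).dotProduct_mulVec_pos hzi)
    · exact ⟨i0, Finset.mem_univ i0, (hM i0).dotProduct_mulVec_pos hi0⟩

/-! ### The per-block solution -/

noncomputable def Xb (ς : ℝ) (s : ℕ) : Matrix (Fin s) (Fin s) ℝ := (ς • Sm s)⁻¹

lemma P_posDef {ς : ℝ} (hς : 0 < ς) (s : ℕ) : (ς • Sm s).PosDef :=
  posDef_smul (Sm_posDef s) hς

lemma Xb_posDef {ς : ℝ} (hς : 0 < ς) (s : ℕ) : (Xb ς s).PosDef :=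
  (P_posDef hς s).inv

lemma Xb_symm {ς : ℝ} (hς : 0 < ς) (s : ℕ) : (Xb ς s)ᵀ = Xb ς s := by
  have h := (Xb_posDef hς s).1.eq
  rwa [Matrix.conjTranspose_eq_transpose_of_trivial] at h

lemma Xb_eq {ς : ℝ} (hς : 0 < ς) (s : ℕ) :
    Xb ς s * Aof s + (Aof s)ᵀ * Xb ς s + Xb ς s
      = ς • (Xb ς s * Eof s * Xb ς s) := by
  set P := ς • Sm s with hP
  set X := Xb ς s with hX
  have hdet : IsUnit P.det := isUnit_iff_ne_zero.mpr (ne_of_gt (P_posDef hς s).det_pos)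
  have hXP : X * P = 1 := Matrix.nonsing_inv_mul P hdet
  have hPX : P * X = 1 := Matrix.mul_nonsing_inv P hdet
  have hlyapP : Aof s * P + P * (Aof s)ᵀ + P = ς • Eof s := by
    rw [hP, mul_smul_comm, smul_mul_assoc, ← smul_add, ← smul_add, lyap s]
  have h1 : X * (Aof s * P + P * (Aof s)ᵀ + P) * X = X * (ς • Eof s) * X := by
    rw [hlyapP]
  have h2 : X * (Aof s * P + P * (Aof s)ᵀ + P) * X
      = X * Aof s + (Aof s)ᵀ * X + X := by
    rw [mul_add, mul_add, add_mul, add_mul]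
    congr 1
    · congr 1
      · rw [← mul_assoc X (Aof s) P, mul_assoc (X * Aof s) P X, hPX, mul_one]
      · rw [← mul_assoc X P (Aof s)ᵀ, hXP, one_mul]
    · rw [mul_assoc X P X, ← mul_assoc X P X, hXP, one_mul]
  have h3 : X * (ς • Eof s) * X = ς • (X * Eof s * X) := by
    rw [mul_smul_comm, smul_mul_assoc]
  rw [← h2, h1, h3]

end Stmt14Aux

open Stmt14Aux

theorem stmt14 (p : ℕ) (hp : 1 ≤ p) (r : Fin p → ℕ) (hr : ∀ i, 1 ≤ r i)
    (A : Matrix ((i : Fin p) × Fin (r i)) ((i : Fin p) × Fin (r i)) ℝ)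
    (hA : A = Matrix.blockDiagonal' fun i =>
      Matrix.of fun a b : Fin (r i) => if (a : ℕ) + 1 = (b : ℕ) then (1 : ℝ) else 0)
    (B : Matrix ((i : Fin p) × Fin (r i)) (Fin p) ℝ)
    (hB : B = Matrix.of fun x j =>
      if x.1 = j ∧ (x.2 : ℕ) + 1 = r x.1 then (1 : ℝ) else 0) :
    ∀ ς : ℝ, 0 < ς →
      ∃ (K : Matrix (Fin p) ((i : Fin p) × Fin (r i)) ℝ) (ϑ : ℝ)
        (X R : Matrix ((i : Fin p) × Fin (r i)) ((i : Fin p) × Fin (r i)) ℝ),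
        0 < ϑ ∧ X.PosDef ∧
        X * (A - ς • (B * K)) + (A - ς • (B * K))ᵀ * X = -(Rᵀ * R) - (2 * ϑ) • X ∧
        X * B = Kᵀ := by
  intro ς hς
  have hA' : A = Matrix.blockDiagonal' (fun i => Aof (r i)) := hA
  set Xf : Matrix ((i : Fin p) × Fin (r i)) ((i : Fin p) × Fin (r i)) ℝ :=
    Matrix.blockDiagonal' (fun i => Xb ς (r i)) with hXfdef
  have hXfT : Xfᵀ = Xf := by
    rw [hXfdef, Matrix.blockDiagonal'_transpose]
    have h : (fun i => (Xb ς (r i))ᵀ) = fun i => Xb ς (r i) :=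
      funext fun i => Xb_symm hς (r i)
    rw [h]
  -- B-facts
  have hBtB : Bᵀ * B = (1 : Matrix (Fin p) (Fin p) ℝ) := by
    subst hB
    ext j j'
    rw [Matrix.mul_apply]
    simp only [Matrix.transpose_apply, Matrix.of_apply]
    rw [← Finset.univ_sigma_univ, Finset.sum_sigma]
    by_cases hjj : j = j'
    · subst hjj
      rw [Matrix.one_apply_eq]
      rw [Finset.sum_eq_single j]
      · rw [Finset.sum_eq_single (⟨r j - 1, by have := hr j; omega⟩ : Fin (r j))]
        · have : (((⟨r j - 1, by have := hr j; omega⟩ : Fin (r j)) : ℕ) + 1 = r j) := by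
            have := hr j; simp; omega
          simp [this]
        · intro b _ hb
          have : ¬((b : ℕ) + 1 = r j) := by
            intro hc
            apply hb
            apply Fin.ext
            simp
            omega
          simp [this]
        · simp
      · intro i _ hij
        apply Finset.sum_eq_zero
        intro b _
        simp [hij]
      · simp
    · rw [Matrix.one_apply_ne hjj]
      apply Finset.sum_eq_zero
      intro i _
      apply Finset.sum_eq_zero
      intro b _
      by_cases h1 : i = j
      · subst h1
        simp [hjj]
      · simp [h1]
  have hBBt : B * Bᵀ = Matrix.blockDiagonal' (fun i => Eof (r i)) := by
    subst hB
    ext x y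
    rcases x with ⟨i, a⟩
    rcases y with ⟨i', a'⟩
    rw [Matrix.mul_apply]
    simp only [Matrix.transpose_apply, Matrix.of_apply]
    by_cases h : i = i'
    · subst h
      rw [Matrix.blockDiagonal'_apply_eq]
      rw [Finset.sum_eq_single i]
      · simp only [Eof, Matrix.of_apply]
        split_ifs with h1 h2 h3 <;> simp_all <;> tauto
      · intro j _ hij
        simp [show ¬(i = j) from fun hc => hij hc.symm]
      · simp
    · rw [Matrix.blockDiagonal'_apply_ne _ _ _ h]
      apply Finset.sum_eq_zero
      intro j _
      by_cases h1 : i = j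
      · subst h1
        simp [show ¬(i' = i) from fun hc => h hc.symm]
      · simp [h1]
  -- the master identity
  have master : Xf * A + Aᵀ * Xf + Xf = ς • (Xf * (B * Bᵀ) * Xf) := by
    rw [hA', hBBt, hXfdef, Matrix.blockDiagonal'_transpose,
      ← Matrix.blockDiagonal'_mul, ← Matrix.blockDiagonal'_mul,
      ← Matrix.blockDiagonal'_mul, ← Matrix.blockDiagonal'_mul,
      ← Matrix.blockDiagonal'_add, ← Matrix.blockDiagonal'_add,
      ← Matrix.blockDiagonal'_smul]
    exact congrArg Matrix.blockDiagonal' (funext fun i => Xb_eq hς (r i))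
  refine ⟨Bᵀ * Xf, 1/2, Xf, Real.sqrt ς • (B * (Bᵀ * Xf)), by norm_num,
    posDef_blockDiagonal' _ (fun i => Xb_posDef hς (r i)), ?_, ?_⟩
  · -- main equation
    have e1 : Bᵀ * (B * (Bᵀ * Xf)) = Bᵀ * Xf := by
      rw [← Matrix.mul_assoc, hBtB, Matrix.one_mul]
    have hT : (Real.sqrt ς • (B * (Bᵀ * Xf)))ᵀ * (Real.sqrt ς • (B * (Bᵀ * Xf)))
        = ς • (Xf * (B * (Bᵀ * Xf))) := by
      rw [Matrix.transpose_smul, Matrix.smul_mul, Matrix.mul_smul, smul_smul,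
        Real.mul_self_sqrt hς.le]
      congr 1
      rw [Matrix.transpose_mul, Matrix.transpose_mul, Matrix.transpose_transpose, hXfT]
      calc Xf * B * Bᵀ * (B * (Bᵀ * Xf))
          = Xf * (B * (Bᵀ * (B * (Bᵀ * Xf)))) := by
            simp only [Matrix.mul_assoc]
        _ = Xf * (B * (Bᵀ * Xf)) := by rw [e1]
    have master' : Xf * A + Aᵀ * Xf + Xf = ς • (Xf * (B * (Bᵀ * Xf))) := by
      rw [master]
      congr 1
      simp only [Matrix.mul_assoc]
    have hXA : Xf * A = ς • (Xf * (B * (Bᵀ * Xf))) - Aᵀ * Xf - Xf := by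
      rw [← master']
      abel
    rw [hT]
    have hexp : Xf * (A - ς • (B * (Bᵀ * Xf)))
        = Xf * A - ς • (Xf * (B * (Bᵀ * Xf))) := by
      rw [Matrix.mul_sub, Matrix.mul_smul]
    have hexp2 : (A - ς • (B * (Bᵀ * Xf)))ᵀ * Xf
        = Aᵀ * Xf - ς • (Xf * (B * (Bᵀ * Xf))) := by
      rw [Matrix.transpose_sub, Matrix.sub_mul, Matrix.transpose_smul, Matrix.smul_mul]
      congr 1
      rw [Matrix.transpose_mul, Matrix.transpose_mul, Matrix.transpose_transpose, hXfT]
      simp only [Matrix.mul_assoc]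
    rw [hexp, hexp2, hXA]
    rw [show (2 * (1/2 : ℝ)) = 1 by norm_num, one_smul]
    abel
  · -- X * B = Kᵀ
    rw [Matrix.transpose_mul, Matrix.transpose_transpose, hXfT]
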